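/- In the Cartesian product K_3 □ K_3, the neighborhood of every vertex induces a graph isomorphic to 2K_2; consequently K_3 □ K_3 is claw-induced-saturated. -/

import Mathlib

open SimpleGraph

/-- `G` contains an induced copy of `H`. -/
def HasInducedCopy {W V : Type*} (H : SimpleGraph W) (G : SimpleGraph V) : Prop :=
  Nonempty (H ↪g G)

/-- `G` is `H`-induced-saturated: `G` has no induced copy of `H`, but deleting any edge
or adding any non-edge creates an induced copy of `H`. -/
def IsIndSat {V W : Type*} (G : SimpleGraph V) (H : SimpleGraph W) : Prop :=
  ¬ HasInducedCopy H G ∧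
  (∀ u v : V, G.Adj u v → HasInducedCopy H (G.deleteEdges {s(u, v)})) ∧
  (∀ u v : V, u ≠ v → ¬ G.Adj u v →
    HasInducedCopy H (G ⊔ SimpleGraph.fromEdgeSet {s(u, v)}))

/-- The claw `K_{1,3}`: star with center `0` and leaves `1, 2, 3`. -/
def claw : SimpleGraph (Fin 4) :=
  SimpleGraph.fromRel (fun i _ => i = 0)

/-- `2K₂`: two disjoint edges. -/
def twoK2 : SimpleGraph (Fin 2 × Fin 2) :=
  SimpleGraph.fromRel (fun x y => x.1 = y.1)

/-- The Cartesian product `K₃ □ K₃`. -/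
def K33 : SimpleGraph (Fin 3 × Fin 3) :=
  (completeGraph (Fin 3)).boxProd (completeGraph (Fin 3))

/-! ### Decidability instances -/

instance : DecidableRel K33.Adj := fun x y =>
  decidable_of_iff ((x.1 ≠ y.1 ∧ x.2 = y.2) ∨ (x.2 ≠ y.2 ∧ x.1 = y.1)) (by
    rw [K33, SimpleGraph.boxProd_adj]; rfl)

instance : DecidableRel claw.Adj := fun x y =>
  decidable_of_iff _ (SimpleGraph.fromRel_adj _ x y).symm

instance : DecidableRel twoK2.Adj := fun x y =>
  decidable_of_iff _ (SimpleGraph.fromRel_adj _ x y).symm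

instance (v : Fin 3 × Fin 3) : DecidablePred (· ∈ K33.neighborSet v) := fun x =>
  inferInstanceAs (Decidable (K33.Adj v x))

instance (u v : Fin 3 × Fin 3) : DecidableRel (K33.deleteEdges {s(u,v)}).Adj := fun a b =>
  decidable_of_iff (K33.Adj a b ∧ ¬ s(a,b) = s(u,v)) (by
    rw [SimpleGraph.deleteEdges_adj]; simp)

instance (u v : Fin 3 × Fin 3) :
    DecidableRel (K33 ⊔ SimpleGraph.fromEdgeSet {s(u,v)}).Adj := fun a b =>
  decidable_of_iff (K33.Adj a b ∨ (s(a,b) = s(u,v) ∧ a ≠ b)) (by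
    rw [SimpleGraph.sup_adj, SimpleGraph.fromEdgeSet_adj]; simp)

/-! ### Part 1: neighborhoods induce `2K₂` -/

/-- Explicit parametrization of the neighborhood of `v` in `K₃ □ K₃`. -/
def nb (v : Fin 3 × Fin 3) : Fin 2 × Fin 2 → Fin 3 × Fin 3 := fun p =>
  if p.1 = 0 then (v.1, v.2 + (if p.2 = 0 then 1 else 2))
  else (v.1 + (if p.2 = 0 then 1 else 2), v.2)

lemma nb_mem : ∀ v x, nb v x ∈ K33.neighborSet v := by decide

lemma nb_bij :
    ∀ v, Function.Bijective (Set.codRestrict (nb v) (K33.neighborSet v) (nb_mem v)) := by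
  decide

lemma nb_adj : ∀ v a b, K33.Adj (nb v a) (nb v b) ↔ twoK2.Adj a b := by decide

/-! ### Part 2: claw-induced-saturation -/

/-- Build an induced claw from a claw configuration. -/
def mkClawEmb {V : Type*} (G : SimpleGraph V) {c x y z : V}
    (hcx : G.Adj c x) (hcy : G.Adj c y) (hcz : G.Adj c z)
    (hxy : ¬ G.Adj x y) (hxz : ¬ G.Adj x z) (hyz : ¬ G.Adj y z)
    (nxy : x ≠ y) (nxz : x ≠ z) (nyz : y ≠ z) : claw ↪g G := by
  have h1 := hcx.ne; have h2 := hcy.ne; have h3 := hcz.ne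
  have hxy' : ¬ G.Adj y x := fun h => hxy h.symm
  have hxz' : ¬ G.Adj z x := fun h => hxz h.symm
  have hyz' : ¬ G.Adj z y := fun h => hyz h.symm
  refine ⟨⟨![c,x,y,z], ?_⟩, ?_⟩
  · intro a b hab
    fin_cases a <;> fin_cases b <;> simp_all
  · intro a b
    show G.Adj (![c,x,y,z] a) (![c,x,y,z] b) ↔ claw.Adj a b
    fin_cases a <;> fin_cases b <;>
      simp [claw, SimpleGraph.fromRel_adj, hcx, hcy, hcz, hcx.symm, hcy.symm, hcz.symm,
        hxy, hxz, hyz, hxy', hxz', hyz', G.irrefl]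

/-- A claw configuration in a graph. -/
def ClawCfg {V : Type*} (G : SimpleGraph V) (c x y z : V) : Prop :=
  G.Adj c x ∧ G.Adj c y ∧ G.Adj c z ∧
    ¬ G.Adj x y ∧ ¬ G.Adj x z ∧ ¬ G.Adj y z ∧ x ≠ y ∧ x ≠ z ∧ y ≠ z

instance {V : Type*} [DecidableEq V] (G : SimpleGraph V) [DecidableRel G.Adj]
    (c x y z : V) : Decidable (ClawCfg G c x y z) :=
  inferInstanceAs (Decidable (_ ∧ _))

lemma hasCopy_of_cfg {V : Type*} {G : SimpleGraph V} {c x y z : V}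
    (h : ClawCfg G c x y z) : HasInducedCopy claw G := by
  obtain ⟨h1, h2, h3, h4, h5, h6, h7, h8, h9⟩ := h
  exact ⟨mkClawEmb G h1 h2 h3 h4 h5 h6 h7 h8 h9⟩

/-- Witness for edge deletion. -/
def Fdel (u v : Fin 3 × Fin 3) : Fin 4 → Fin 3 × Fin 3 :=
  if u.1 = v.1 then
    ![(u.1, -(u.2+v.2)), (u.1, u.2), (u.1, v.2), (u.1+1, -(u.2+v.2))]
  else
    ![(-(u.1+v.1), u.2), (u.1, u.2), (v.1, u.2), (-(u.1+v.1), u.2+1)]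

/-- Witness for non-edge addition. -/
def Fadd (u v : Fin 3 × Fin 3) : Fin 4 → Fin 3 × Fin 3 :=
  ![u, v, (u.1, -(u.2+v.2)), (-(u.1+v.1), u.2)]

lemma no_claw_cfg : ∀ c x y z : Fin 3 × Fin 3, ¬ ClawCfg K33 c x y z := by decide

lemma del_cfg : ∀ u v : Fin 3 × Fin 3, K33.Adj u v →
    ClawCfg (K33.deleteEdges {s(u,v)}) (Fdel u v 0) (Fdel u v 1) (Fdel u v 2) (Fdel u v 3) := by
  decide

lemma add_cfg : ∀ u v : Fin 3 × Fin 3, u ≠ v → ¬ K33.Adj u v →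
    ClawCfg (K33 ⊔ SimpleGraph.fromEdgeSet {s(u,v)})
      (Fadd u v 0) (Fadd u v 1) (Fadd u v 2) (Fadd u v 3) := by
  decide

/-- In `K₃ □ K₃` the neighborhood of every vertex induces a graph isomorphic
to `2K₂`; consequently `K₃ □ K₃` is claw-induced-saturated. -/
theorem K33_claw_indSat :
    (∀ v, Nonempty ((K33.induce (K33.neighborSet v)) ≃g twoK2)) ∧
    IsIndSat K33 claw := by
  refine ⟨fun v => ⟨Iso.symm ⟨Equiv.ofBijective _ (nb_bij v), fun {a b} => nb_adj v a b⟩⟩,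
    ?_, ?_, ?_⟩
  · rintro ⟨f⟩
    exact no_claw_cfg (f 0) (f 1) (f 2) (f 3)
      ⟨f.map_adj_iff.mpr (by decide), f.map_adj_iff.mpr (by decide),
        f.map_adj_iff.mpr (by decide),
        fun h => (by decide : ¬ claw.Adj 1 2) (f.map_adj_iff.mp h),
        fun h => (by decide : ¬ claw.Adj 1 3) (f.map_adj_iff.mp h),
        fun h => (by decide : ¬ claw.Adj 2 3) (f.map_adj_iff.mp h),
        fun h => (by decide : (1 : Fin 4) ≠ 2) (f.injective h),
        fun h => (by decide : (1 : Fin 4) ≠ 3) (f.injective h),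
        fun h => (by decide : (2 : Fin 4) ≠ 3) (f.injective h)⟩
  · exact fun u v h => hasCopy_of_cfg (del_cfg u v h)
  · exact fun u v h h' => hasCopy_of_cfg (add_cfg u v h h')
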